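/- Let b > 1, let Φ : [1,∞) → (1,∞) be continuous non-decreasing with Φ(r) → ∞, and let ε : [1,∞) → (0,1] be continuous non-increasing. Define E = { r ∈ [1,∞) : Φ(r + r·ε(r)·(log Φ(r))^{−b}) ≥ (1 + ε(r))·Φ(r) }. Then E has finite logarithmic measure, i.e. ∫_E dr/r < ∞. -/

import Mathlib

open Real Filter Set MeasureTheory Topology

lemma key_convex {b u v : ℝ} (hb : 1 < b) (hu : 0 < u) (huv : u ≤ v) :
    (b - 1) * (v - u) * v ^ (-b) ≤ u ^ (1 - b) - v ^ (1 - b) := by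
  have hv : 0 < v := hu.trans_le huv
  have hx : 0 < u / v := div_pos hu hv
  have hx1 : u / v ≤ 1 := (div_le_one hv).2 huv
  have hlog : Real.log (u / v) ≤ u / v - 1 := Real.log_le_sub_one_of_pos hx
  have hexp : 1 + (1 - b) * Real.log (u / v) ≤ (u / v) ^ (1 - b) := by
    rw [Real.rpow_def_of_pos hx, mul_comm]
    linarith [Real.add_one_le_exp (Real.log (u / v) * (1 - b))]
  have hmain : (b - 1) * (1 - u / v) ≤ (u / v) ^ (1 - b) - 1 := by
    nlinarith [hlog, hexp]
  have hvp : (0:ℝ) < v ^ (1 - b) := Real.rpow_pos_of_pos hv _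
  have h2 : (b - 1) * (1 - u / v) * v ^ (1 - b) ≤ ((u / v) ^ (1 - b) - 1) * v ^ (1 - b) :=
    mul_le_mul_of_nonneg_right hmain hvp.le
  have e1 : (u / v) ^ (1 - b) * v ^ (1 - b) = u ^ (1 - b) := by
    rw [← Real.mul_rpow hx.le hv.le, div_mul_cancel₀]; exact hv.ne'
  have e2 : v ^ (1 - b) = v * v ^ (-b) := by
    nth_rewrite 2 [(Real.rpow_one v).symm]
    rw [← Real.rpow_add hv]; ring_nf
  calc (b - 1) * (v - u) * v ^ (-b) = (b - 1) * (1 - u / v) * (v * v ^ (-b)) := by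
        field_simp
    _ = (b - 1) * (1 - u / v) * v ^ (1 - b) := by rw [← e2]
    _ ≤ ((u / v) ^ (1 - b) - 1) * v ^ (1 - b) := h2
    _ = u ^ (1 - b) - v ^ (1 - b) := by rw [sub_mul, e1, one_mul]

set_option maxHeartbeats 1000000 in
/-- Borel–Nevanlinna-type growth lemma: the set
`E = { r ≥ 1 : Φ(r + r·ε(r)·(log Φ(r))^{-b}) ≥ (1+ε(r))Φ(r) }` has finite logarithmic
measure. -/
theorem stmt_7 (b : ℝ) (hb : 1 < b) (Φ ε : ℝ → ℝ)
    (hΦc : ContinuousOn Φ (Set.Ici 1)) (hΦm : MonotoneOn Φ (Set.Ici 1))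
    (hΦ1 : ∀ r, 1 ≤ r → 1 < Φ r) (hΦtop : Tendsto Φ atTop atTop)
    (hεc : ContinuousOn ε (Set.Ici 1)) (hεm : AntitoneOn ε (Set.Ici 1))
    (hε : ∀ r, 1 ≤ r → ε r ∈ Set.Ioc (0 : ℝ) 1) :
    ∫⁻ r in {r : ℝ | 1 ≤ r ∧
        (1 + ε r) * Φ r ≤ Φ (r + r * ε r * Real.log (Φ r) ^ (-b))},
      ENNReal.ofReal r⁻¹ < ⊤ := by
  -- notation
  set E : Set ℝ := {r : ℝ | 1 ≤ r ∧
      (1 + ε r) * Φ r ≤ Φ (r + r * ε r * Real.log (Φ r) ^ (-b))} with hEdef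
  set u₁ : ℝ := Real.log (Φ 1) with hu₁def
  have hΦ1pos : (0:ℝ) < Φ 1 := lt_trans one_pos (hΦ1 1 le_rfl)
  have hu₁ : 0 < u₁ := Real.log_pos (hΦ1 1 le_rfl)
  -- basic facts about u(r) = log Φ r
  have hΦpos : ∀ r, 1 ≤ r → 0 < Φ r := fun r hr => lt_trans one_pos (hΦ1 r hr)
  have hupos : ∀ r, 1 ≤ r → 0 < Real.log (Φ r) := fun r hr => Real.log_pos (hΦ1 r hr)
  have huge : ∀ r, 1 ≤ r → u₁ ≤ Real.log (Φ r) := fun r hr =>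
    Real.log_le_log hΦ1pos (hΦm (Set.mem_Ici.2 le_rfl) hr hr)
  -- E is closed
  have hEclosed : IsClosed E := by
    have hgC : ContinuousOn (fun r => r + r * ε r * Real.log (Φ r) ^ (-b)) (Set.Ici 1) := by
      apply continuousOn_id.add
      apply (continuousOn_id.mul hεc).mul
      apply ContinuousOn.rpow_const (hΦc.log (fun r hr => (hΦpos r hr).ne'))
      exact fun r hr => Or.inl (hupos r hr).ne'
    have hmaps : ∀ r ∈ Set.Ici (1:ℝ), (r + r * ε r * Real.log (Φ r) ^ (-b)) ∈ Set.Ici (1:ℝ) := by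
      intro r hr
      have hr1 : (1:ℝ) ≤ r := hr
      have : 0 ≤ r * ε r * Real.log (Φ r) ^ (-b) := by
        have := (hε r hr1).1
        have := Real.rpow_pos_of_pos (hupos r hr1) (-b)
        positivity
      simp only [Set.mem_Ici] at *
      linarith
    have hFC : ContinuousOn (fun r => Φ (r + r * ε r * Real.log (Φ r) ^ (-b))
        - (1 + ε r) * Φ r) (Set.Ici 1) := by
      exact (hΦc.comp hgC hmaps).sub ((continuousOn_const.add hεc).mul hΦc)
    have : E = Set.Ici 1 ∩ (fun r => Φ (r + r * ε r * Real.log (Φ r) ^ (-b))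
        - (1 + ε r) * Φ r) ⁻¹' (Set.Ici 0) := by
      ext r
      simp only [hEdef, Set.mem_setOf_eq, Set.mem_inter_iff, Set.mem_Ici, Set.mem_preimage]
      constructor
      · rintro ⟨h1, h2⟩; exact ⟨h1, by linarith⟩
      · rintro ⟨h1, h2⟩; exact ⟨h1, by linarith⟩
    rw [this]
    exact hFC.preimage_isClosed_of_isClosed isClosed_Ici isClosed_Ici
  -- change of variables: the integral equals the Lebesgue measure of S = exp ⁻¹' E
  set S : Set ℝ := Real.exp ⁻¹' E with hSdef
  have hSmeas : MeasurableSet S := (hEclosed.preimage Real.continuous_exp).measurableSet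
  have himg : Real.exp '' S = E := by
    apply Set.Subset.antisymm
    · rintro r ⟨s, hs, rfl⟩; exact hs
    · intro r hr
      have hr1 : (1:ℝ) ≤ r := hr.1
      exact ⟨Real.log r, by
        simpa only [hSdef, Set.mem_preimage, Real.exp_log (lt_of_lt_of_le one_pos hr1)] using hr,
        Real.exp_log (lt_of_lt_of_le one_pos hr1)⟩
  have hInt : ∫⁻ r in E, ENNReal.ofReal r⁻¹ = volume S := by
    have := lintegral_image_eq_lintegral_abs_det_fderiv_mul volume hSmeas
      (f' := fun x => (1 : ℝ →L[ℝ] ℝ).smulRight (Real.exp x))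
      (fun x _ => (Real.hasDerivAt_exp x).hasDerivWithinAt.hasFDerivWithinAt)
      (Real.exp_injective.injOn) (fun r => ENNReal.ofReal r⁻¹)
    rw [himg] at this
    rw [this]
    have : ∀ x, ENNReal.ofReal |((1 : ℝ →L[ℝ] ℝ).smulRight (Real.exp x)).det|
        * ENNReal.ofReal (Real.exp x)⁻¹ = 1 := by
      intro x
      rw [ContinuousLinearMap.det_smulRight, ContinuousLinearMap.one_apply, one_mul, abs_of_pos (Real.exp_pos x),
        ← ENNReal.ofReal_mul (Real.exp_pos x).le, mul_inv_cancel₀ (Real.exp_pos x).ne',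
        ENNReal.ofReal_one]
    simp only [this]
    exact setLIntegral_one S
  rw [hInt]
  -- the comparison function ψ
  set ψ : ℝ → ℝ := fun s => -(Real.log (Φ (max (Real.exp s) 1)) ^ (1 - b)) with hψdef
  have hψmono : Monotone ψ := by
    intro s t hst
    have h1 : (1:ℝ) ≤ max (Real.exp s) 1 := le_max_right _ _
    have h2 : (1:ℝ) ≤ max (Real.exp t) 1 := le_max_right _ _
    have hm : max (Real.exp s) 1 ≤ max (Real.exp t) 1 :=
      max_le_max (Real.exp_le_exp.2 hst) le_rfl
    have hlog : Real.log (Φ (max (Real.exp s) 1)) ≤ Real.log (Φ (max (Real.exp t) 1)) :=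
      Real.log_le_log (hΦpos _ h1) (hΦm h1 h2 hm)
    have := Real.rpow_le_rpow_of_nonpos (hupos _ h1) hlog (by linarith : 1 - b ≤ 0)
    simp only [hψdef]; linarith
  have hψcont : Continuous ψ := by
    have hm : Continuous fun s : ℝ => max (Real.exp s) 1 :=
      Real.continuous_exp.max continuous_const
    have hΦm' : Continuous fun s : ℝ => Φ (max (Real.exp s) 1) :=
      hΦc.comp_continuous hm (fun x => Set.mem_Ici.2 (le_max_right _ _))
    have hlogc : Continuous fun s : ℝ => Real.log (Φ (max (Real.exp s) 1)) :=
      hΦm'.log (fun x => (hΦpos _ (le_max_right _ _)).ne')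
    exact (hlogc.rpow_const (fun x => Or.inl (hupos _ (le_max_right _ _)).ne')).neg
  have hψneg : ∀ s, ψ s ≤ 0 := by
    intro s
    have := Real.rpow_pos_of_pos (hupos _ (le_max_right (Real.exp s) 1)) (1 - b)
    simp only [hψdef]; linarith
  -- the radii function
  set ρ : ℝ → ℝ := fun s =>
    Real.log (1 + ε (Real.exp s) * Real.log (Φ (Real.exp s)) ^ (-b)) with hρdef
  set K : ℝ := 1 + 1 / (2 * u₁) with hKdef
  have hK1 : 1 ≤ K := by
    have : 0 < 1 / (2 * u₁) := by positivity
    simp only [hKdef]; linarith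
  set c : ℝ := (b - 1) / 2 * K ^ (-b) with hcdef
  have hc : 0 < c := by
    have : (0:ℝ) < K ^ (-b) := Real.rpow_pos_of_pos (by linarith) _
    have : (0:ℝ) < (b-1)/2 := by linarith
    positivity
  set R : ℝ := u₁ ^ (-b) with hRdef
  -- key pointwise estimate
  have hkey : ∀ a ∈ S, 0 < ρ a ∧ ρ a ≤ R ∧ c * ρ a ≤ ψ (a + ρ a) - ψ a := by
    intro a ha
    set r : ℝ := Real.exp a with hrdef
    have hrE : r ∈ E := ha
    obtain ⟨hr1, hcond⟩ := hrE
    set u : ℝ := Real.log (Φ r) with hudef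
    have hu : 0 < u := hupos r hr1
    have huu : u₁ ≤ u := huge r hr1
    obtain ⟨hεr0, hεr1⟩ := hε r hr1
    have hεr : ε r ∈ Set.Ioc (0:ℝ) 1 := ⟨hεr0, hεr1⟩
    have hub : 0 < u ^ (-b) := Real.rpow_pos_of_pos hu _
    have hx : 0 < ε r * u ^ (-b) := mul_pos hεr.1 hub
    have hρa : ρ a = Real.log (1 + ε r * u ^ (-b)) := rfl
    have hρpos : 0 < ρ a := by rw [hρa]; exact Real.log_pos (by linarith)
    have hρle : ρ a ≤ ε r * u ^ (-b) := by
      rw [hρa]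
      have := Real.log_le_sub_one_of_pos (by linarith : (0:ℝ) < 1 + ε r * u ^ (-b))
      linarith
    have hubR : u ^ (-b) ≤ R := by
      rw [hRdef]
      exact Real.rpow_le_rpow_of_nonpos hu₁ huu (by linarith)
    have hρR : ρ a ≤ R := by
      have : ε r * u ^ (-b) ≤ 1 * u ^ (-b) := mul_le_mul_of_nonneg_right hεr.2 hub.le
      nlinarith
    refine ⟨hρpos, hρR, ?_⟩
    -- identify exp (a + ρ a) with g r
    set gr : ℝ := r + r * ε r * u ^ (-b) with hgrdef
    have hrpos : 0 < r := lt_of_lt_of_le one_pos hr1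
    have hgr1 : r ≤ gr := by nlinarith
    have hexp_sum : Real.exp (a + ρ a) = gr := by
      rw [Real.exp_add, hρa, Real.exp_log (by linarith : (0:ℝ) < 1 + ε r * u ^ (-b))]
      simp only [hgrdef, ← hrdef]
      ring
    -- values of ψ
    have hψa : ψ a = -(u ^ (1 - b)) := by
      simp only [hψdef, ← hrdef, max_eq_left hr1, hudef]
    set u' : ℝ := Real.log (Φ gr) with hu'def
    have hψa' : ψ (a + ρ a) = -(u' ^ (1 - b)) := by
      simp only [hψdef, hexp_sum, max_eq_left (le_trans hr1 hgr1), hu'def]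
    -- log of the growth condition
    have hΦgr : (1 + ε r) * Φ r ≤ Φ gr := hcond
    have hlog1ε : ε r / 2 ≤ Real.log (1 + ε r) := by
      have h1 : (0:ℝ) < 1 + ε r := by linarith [hεr.1]
      have h2 := Real.log_le_sub_one_of_pos (by positivity : (0:ℝ) < (1 + ε r)⁻¹)
      rw [Real.log_inv] at h2
      have h3 : Real.log (1 + ε r) ≥ 1 - (1 + ε r)⁻¹ := by linarith
      have h4 : 1 - (1 + ε r)⁻¹ = ε r / (1 + ε r) := by field_simp; ring
      have h5 : ε r / 2 ≤ ε r / (1 + ε r) := by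
        rw [div_le_div_iff₀ (by norm_num) h1]
        nlinarith [hεr.1, hεr.2]
      linarith
    have hu'ge : u + ε r / 2 ≤ u' := by
      have h1 : (0:ℝ) < 1 + ε r := by linarith [hεr.1]
      have h2 : Real.log ((1 + ε r) * Φ r) ≤ u' :=
        Real.log_le_log (mul_pos h1 (hΦpos r hr1)) hΦgr
      rw [Real.log_mul h1.ne' (hΦpos r hr1).ne'] at h2
      rw [← hudef] at h2
      linarith
    -- convexity estimate
    have hv : 0 < u + ε r / 2 := by linarith [hεr0]
    have hmono' : u' ^ (1-b) ≤ (u + ε r / 2) ^ (1-b) :=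
      Real.rpow_le_rpow_of_nonpos hv hu'ge (by linarith)
    have hconv := key_convex hb hu (by linarith [hεr0] : u ≤ u + ε r / 2)
    -- lower bound for (u + ε r / 2) ^ (-b)
    have hKu : u + ε r / 2 ≤ K * u := by
      have h1 : ε r / 2 ≤ 1 / 2 := by linarith [hεr.2]
      have h2 : 1 / 2 ≤ u / (2 * u₁) := by
        rw [div_le_div_iff₀ (by norm_num) (by positivity)]
        linarith
      have : K * u = u + u / (2 * u₁) := by
        simp only [hKdef]; field_simp
      linarith
    have hKub : (K * u) ^ (-b) ≤ (u + ε r / 2) ^ (-b) :=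
      Real.rpow_le_rpow_of_nonpos hv hKu (by linarith)
    have hKmul : (K * u) ^ (-b) = K ^ (-b) * u ^ (-b) :=
      Real.mul_rpow (by linarith) hu.le
    -- combine
    have hdiff : ψ (a + ρ a) - ψ a = u ^ (1-b) - u' ^ (1-b) := by
      rw [hψa, hψa']; ring
    have hKb : 0 < K ^ (-b) := Real.rpow_pos_of_pos (by linarith) _
    have step1 : (b - 1) * (ε r / 2) * (K ^ (-b) * u ^ (-b)) ≤ ψ (a + ρ a) - ψ a := by
      rw [hdiff]
      calc (b - 1) * (ε r / 2) * (K ^ (-b) * u ^ (-b))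
          = (b - 1) * (ε r / 2) * ((K * u) ^ (-b)) := by rw [hKmul]
        _ ≤ (b - 1) * ((u + ε r / 2) - u) * ((u + ε r / 2) ^ (-b)) := by
            have hbε : 0 ≤ (b - 1) * (ε r / 2) :=
              mul_nonneg (by linarith) (by linarith)
            have : (u + ε r / 2) - u = ε r / 2 := by ring
            rw [this]
            exact mul_le_mul_of_nonneg_left hKub hbε
        _ ≤ u ^ (1-b) - (u + ε r / 2) ^ (1-b) := hconv
        _ ≤ u ^ (1-b) - u' ^ (1-b) := by linarith
    have step2 : c * ρ a ≤ (b - 1) * (ε r / 2) * (K ^ (-b) * u ^ (-b)) := by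
      have h1 : c * ρ a ≤ c * (ε r * u ^ (-b)) := mul_le_mul_of_nonneg_left hρle hc.le
      have h2 : c * (ε r * u ^ (-b)) = (b - 1) * (ε r / 2) * (K ^ (-b) * u ^ (-b)) := by
        simp only [hcdef]; ring
      linarith
    exact step2.trans step1
  -- Vitali covering
  obtain ⟨U, hUS, hUdisj, hUcov⟩ :=
    Vitali.exists_disjoint_subfamily_covering_enlargement_closedBall S id ρ R
      (fun a ha => (hkey a ha).2.1) 5 (by norm_num)
  have hUcount : U.Countable := by
    apply hUdisj.countable_of_nonempty_interior
    intro x hx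
    have hρx : 0 < ρ x := (hkey x (hUS hx)).1
    exact ⟨x, Metric.ball_subset_interior_closedBall (Metric.mem_ball_self hρx)⟩
  -- Stieltjes measure of ψ
  set f := hψmono.stieltjesFunction with hfdef
  have hfeq : ⇑f = ψ := by
    funext z
    rw [hfdef, hψmono.stieltjesFunction_eq]
    exact rightLim_eq_of_tendsto
      ((hψcont.tendsto z).mono_left nhdsWithin_le_nhds)
  set μψ := f.measure with hμdef
  have hμIcc : ∀ x y : ℝ, x ≤ y → μψ (Set.Icc x y) = ENNReal.ofReal (ψ y - ψ x) := by
    intro x y _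
    rw [hμdef, f.measure_Icc]
    have hleft : Function.leftLim (⇑f) x = ψ x := by
      rw [hfeq]
      exact leftLim_eq_of_tendsto
        ((hψcont.tendsto x).mono_left nhdsWithin_le_nhds)
    rw [hleft, hfeq]
  have hμuniv : μψ Set.univ < ⊤ := by
    have hbot : Tendsto (⇑f) atBot (𝓝 (ψ 0)) := by
      rw [hfeq]
      apply Tendsto.congr' _ (tendsto_const_nhds (x := ψ 0))
      filter_upwards [eventually_le_atBot (0:ℝ)] with s hs
      have : max (Real.exp s) 1 = 1 := max_eq_right (Real.exp_le_one_iff.2 hs)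
      have h0 : max (Real.exp 0) 1 = 1 := by
        simp [Real.exp_zero]
      simp only [hψdef, this, h0]
    have hbdd : BddAbove (Set.range ψ) := ⟨0, by rintro y ⟨s, rfl⟩; exact hψneg s⟩
    have htop : Tendsto (⇑f) atTop (𝓝 (⨆ s, ψ s)) := by
      rw [hfeq]; exact tendsto_atTop_ciSup hψmono hbdd
    rw [hμdef, f.measure_univ hbot htop]
    exact ENNReal.ofReal_lt_top
  -- assemble
  have hcover : S ⊆ ⋃ x ∈ U, Metric.closedBall x (5 * ρ x) := by
    intro a ha
    obtain ⟨x, hxU, hsub⟩ := hUcov a ha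
    exact Set.mem_biUnion hxU (hsub (Metric.mem_closedBall_self (hkey a ha).1.le))
  have hIccdisj : U.PairwiseDisjoint fun x => Set.Icc x (x + ρ x) := by
    intro x hx y hy hxy
    have hsub : ∀ z ∈ U, Set.Icc z (z + ρ z) ⊆ Metric.closedBall (id z) (ρ z) := by
      intro z hz
      simp only [id_eq]
      rw [Real.closedBall_eq_Icc]
      exact Set.Icc_subset_Icc (by linarith [(hkey z (hUS hz)).1]) le_rfl
    exact (hUdisj hx hy hxy).mono (hsub x hx) (hsub y hy)
  calc volume S ≤ volume (⋃ x ∈ U, Metric.closedBall x (5 * ρ x)) := measure_mono hcover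
    _ ≤ ∑' x : U, volume (Metric.closedBall (x : ℝ) (5 * ρ (x : ℝ))) :=
        measure_biUnion_le volume hUcount _
    _ ≤ ∑' x : U, ENNReal.ofReal (10 / c) * μψ (Set.Icc (x : ℝ) ((x : ℝ) + ρ (x : ℝ))) := by
        apply ENNReal.tsum_le_tsum
        rintro ⟨x, hxU⟩
        have hx := hkey x (hUS hxU)
        rw [Real.volume_closedBall, hμIcc x (x + ρ x) (by linarith [hx.1])]
        rw [← ENNReal.ofReal_mul (by positivity : (0:ℝ) ≤ 10 / c)]
        apply ENNReal.ofReal_le_ofReal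
        have h1 : c * ρ x ≤ ψ (x + ρ x) - ψ x := hx.2.2
        rw [div_mul_eq_mul_div, le_div_iff₀ hc]
        nlinarith [hx.1]
    _ = ENNReal.ofReal (10 / c) * ∑' x : U, μψ (Set.Icc (x : ℝ) ((x : ℝ) + ρ (x : ℝ))) :=
        ENNReal.tsum_mul_left
    _ = ENNReal.ofReal (10 / c) * μψ (⋃ x ∈ U, Set.Icc x (x + ρ x)) := by
        rw [measure_biUnion hUcount hIccdisj (fun x _ => measurableSet_Icc)]
    _ ≤ ENNReal.ofReal (10 / c) * μψ Set.univ := by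
        gcongr
        exact Set.subset_univ _
    _ < ⊤ := ENNReal.mul_lt_top ENNReal.ofReal_lt_top hμuniv
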